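/- Let G be a group, H and K subgroups of G with [G:K] finite. Let L = H ∩ K. If [H:L] is finite and L is a separable subgroup of K (i.e., for each x ∈ K \ L there is a finite group F and homomorphism φ: K → F with φ(x) ∉ φ(L)), then H is a separable subgroup of G. -/

import Mathlib

/-- A subgroup `H` of a group `G` is *separable* in `G` if for each `x ∈ G \ H` there is a
finite group `F` and a group homomorphism `φ : G →* F` with `φ x ∉ φ '' H`. -/
def SubgroupSeparable {G : Type*} [Group G] (H : Subgroup G) : Prop :=
  ∀ x : G, x ∉ H →
    ∃ (F : Type) (_ : Group F) (_ : Finite F) (φ : G →* F), φ x ∉ φ '' (H : Set G)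

/-- If there is a finite-index normal subgroup `C` with `x ∉ H * C`, then we can separate
`x` from `H` in a finite quotient. -/
lemma sep_of_normal_avoid {G : Type*} [Group G] (H C : Subgroup G) [C.Normal]
    (hC : C.FiniteIndex) (x : G) (hx : ∀ h ∈ H, ∀ c ∈ C, x ≠ h * c) :
    ∃ (F : Type) (_ : Group F) (_ : Finite F) (φ : G →* F), φ x ∉ φ '' (H : Set G) := by
  classical
  haveI : Finite (G ⧸ C) := inferInstance
  haveI : Small.{0} (G ⧸ C) := Countable.toSmall _
  refine ⟨Shrink.{0} (G ⧸ C), inferInstance, Finite.of_equiv _ (equivShrink _),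
    (Shrink.mulEquiv.symm.toMonoidHom.comp (QuotientGroup.mk' C)), ?_⟩
  rintro ⟨h, hh, hEq⟩
  have hEq' : (QuotientGroup.mk' C) h = (QuotientGroup.mk' C) x :=
    Shrink.mulEquiv.symm.injective hEq
  have : h⁻¹ * x ∈ C := by
    have := (QuotientGroup.eq (s := C)).mp hEq'
    simpa using this
  exact hx h hh (h⁻¹ * x) this (by group)

/-- Let `H` and `K` be subgroups of `G` with `[G : K]` finite. Let `L = H ⊓ K`. If `[H : L]` is
finite and `L` is a separable subgroup of `K`, then `H` is a separable subgroup of `G`. -/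
theorem separable_of_finite_index_intersection {G : Type*} [Group G] (H K : Subgroup G)
    (hK : K.FiniteIndex) (hHL : ((H ⊓ K).subgroupOf H).FiniteIndex)
    (hLsep : SubgroupSeparable ((H ⊓ K).subgroupOf K)) :
    SubgroupSeparable H := by
  intro x hxH
  by_cases hxHK : ∃ h ∈ H, ∃ k ∈ K, x = h * k
  · -- Case x ∈ HK
    obtain ⟨h, hh, k, hkK, rfl⟩ := hxHK
    have hkL : (⟨k, hkK⟩ : K) ∉ (H ⊓ K).subgroupOf K := by
      intro hmem
      rw [Subgroup.mem_subgroupOf] at hmem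
      exact hxH (H.mul_mem hh hmem.1)
    obtain ⟨F, _, _, ψ, hψ⟩ := hLsep ⟨k, hkK⟩ hkL
    -- M₀ = ψ⁻¹(ψ(L)) has finite index in K
    set M₀ : Subgroup K := (((H ⊓ K).subgroupOf K).map ψ).comap ψ with hM₀
    have hkerM₀ : ψ.ker ≤ M₀ := by
      intro a ha
      simp only [hM₀, Subgroup.mem_comap]
      exact ⟨1, (Subgroup.one_mem _), by rw [map_one]; exact (MonoidHom.mem_ker.mp ha).symm⟩
    have hM₀fi : M₀.FiniteIndex := by
      have : Finite (ψ.range) := Subtype.finite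
      exact Subgroup.finiteIndex_of_le hkerM₀
    -- M = image of M₀ in G
    set M : Subgroup G := M₀.map K.subtype with hM
    have hMfi : M.FiniteIndex := by
      refine ⟨?_⟩
      rw [hM, Subgroup.index_map_subtype]
      exact Nat.mul_ne_zero hM₀fi.index_ne_zero hK.index_ne_zero
    have hLM : ∀ a, a ∈ H → a ∈ K → a ∈ M := by
      intro a haH haK
      refine ⟨⟨a, haK⟩, ?_, rfl⟩
      simp only [hM₀, Subgroup.mem_comap]
      exact ⟨⟨a, haK⟩, by simp [Subgroup.mem_subgroupOf, haH, haK], rfl⟩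
    have hkM : k ∉ M := by
      rintro ⟨⟨k', hk'⟩, hmem, hk'eq⟩
      have : k' = k := hk'eq
      subst this
      simp only [hM₀, Subgroup.mem_comap, Subgroup.mem_map] at hmem
      obtain ⟨l, hl, hle⟩ := hmem
      exact hψ ⟨l, hl, hle⟩
    have hMK : M ≤ K := by
      rintro a ⟨m, _, rfl⟩; exact m.2
    -- C = normal core of M
    haveI := hMfi
    refine sep_of_normal_avoid H M.normalCore (Subgroup.finiteIndex_normalCore _) _ ?_
    intro h₁ hh₁ c hc heq
    have hcM : c ∈ M := M.normalCore_le hc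
    have hcK : c ∈ K := hMK hcM
    -- h * k = h₁ * c, so k = (h⁻¹ h₁) c, with h⁻¹ h₁ ∈ H ∩ K ⊆ M
    have hk_eq : k = (h⁻¹ * h₁) * c := by
      have : h * k = h₁ * c := heq
      group
      rw [mul_assoc, ← this]; group
    have hHmem : h⁻¹ * h₁ ∈ H := H.mul_mem (H.inv_mem hh) hh₁
    have hKmem : h⁻¹ * h₁ ∈ K := by
      have : h⁻¹ * h₁ = k * c⁻¹ := by rw [hk_eq]; group
      rw [this]; exact K.mul_mem hkK (K.inv_mem hcK)
    exact hkM (hk_eq ▸ M.mul_mem (hLM _ hHmem hKmem) hcM)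
  · -- Case x ∉ HK : use C = normal core of K
    refine sep_of_normal_avoid H K.normalCore (Subgroup.finiteIndex_normalCore _) _ ?_
    intro h hh c hc heq
    exact hxHK ⟨h, hh, c, K.normalCore_le hc, heq⟩
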